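/- arXiv:2308.11461 — 10 statements merged into one kernel-verified Lean document; each statement's English description precedes it below -/
import Mathlib

section
/- Suppose the instance is WSPT-sorted, i.e. w j * E k ≥ w k * E j whenever j ≤ k in Fin n. Then the identity permutation minimizes the cost: for every permutation σ : Equiv.Perm (Fin n), cost id ≤ cost σ. (Smith's rule: scheduling jobs in nonincreasing order of w j / E j minimizes the total weighted completion time.) -/
open Finset Nat

/-- Expected cost of schedule `σ` (σ j = position of job j):
`cost σ = ∑ j, w j * ∑_{k : σ k ≤ σ j} E k`. -/
noncomputable def cost {n : ℕ} (w E : Fin n → ℝ) (σ : Equiv.Perm (Fin n)) : ℝ :=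
  ∑ j, w j * ∑ k ∈ Finset.univ.filter (fun k => σ k ≤ σ j), E k

/-- Expected cost of a randomized schedule `μ`. -/
noncomputable def rcost {n : ℕ} (w E : Fin n → ℝ) (μ : Equiv.Perm (Fin n) → ℝ) : ℝ :=
  ∑ σ, μ σ * cost w E σ

/-- Probability that randomized schedule `μ` schedules job `j` before job `k`. -/
noncomputable def Pbefore {n : ℕ} (μ : Equiv.Perm (Fin n) → ℝ) (j k : Fin n) : ℝ :=
  ∑ σ ∈ Finset.univ.filter (fun σ : Equiv.Perm (Fin n) => σ j < σ k), μ σ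

/-- Pairwise decomposition of the cost: diagonal terms plus one term per ordered pair. -/
lemma cost_eq_pairwise {n : ℕ} (w E : Fin n → ℝ) (τ : Equiv.Perm (Fin n)) :
    cost w E τ = (∑ j, w j * E j) +
      ∑ p ∈ Finset.univ.filter (fun p : Fin n × Fin n => p.1 < p.2),
        (if τ p.2 < τ p.1 then w p.1 * E p.2 else w p.2 * E p.1) := by
  classical
  set F : Fin n × Fin n → ℝ := fun p => if τ p.2 ≤ τ p.1 then w p.1 * E p.2 else 0 with hF
  have h1 : cost w E τ = ∑ p : Fin n × Fin n, F p := by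
    rw [cost, Fintype.sum_prod_type]
    refine Finset.sum_congr rfl fun j _ => ?_
    rw [Finset.mul_sum, Finset.sum_filter]
  rw [h1, ← Finset.sum_filter_add_sum_filter_not Finset.univ
    (fun p : Fin n × Fin n => p.1 = p.2) F]
  congr 1
  · rw [Finset.sum_filter, Fintype.sum_prod_type]
    simp [hF]
  · have hu : (Finset.univ.filter fun p : Fin n × Fin n => ¬ p.1 = p.2)
        = (Finset.univ.filter fun p : Fin n × Fin n => p.1 < p.2) ∪
          (Finset.univ.filter fun p : Fin n × Fin n => p.2 < p.1) := by
      ext p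
      simp only [Finset.mem_filter, Finset.mem_union, Finset.mem_univ, true_and]
      exact ne_iff_lt_or_gt
    have hdisj : Disjoint (Finset.univ.filter fun p : Fin n × Fin n => p.1 < p.2)
        (Finset.univ.filter fun p : Fin n × Fin n => p.2 < p.1) := by
      rw [Finset.disjoint_left]
      intro a ha hb
      simp only [Finset.mem_filter] at ha hb
      exact absurd hb.2 (lt_asymm ha.2)
    rw [hu, Finset.sum_union hdisj]
    have hswap : ∑ p ∈ (Finset.univ.filter fun p : Fin n × Fin n => p.2 < p.1), F p
        = ∑ p ∈ (Finset.univ.filter fun p : Fin n × Fin n => p.1 < p.2), F p.swap := by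
      refine Finset.sum_nbij' (fun p => p.swap) (fun p => p.swap) ?_ ?_ ?_ ?_ ?_ <;> simp
    rw [hswap, ← Finset.sum_add_distrib]
    refine Finset.sum_congr rfl fun p hp => ?_
    simp only [Finset.mem_filter] at hp
    have hne : τ p.1 ≠ τ p.2 := fun h => absurd (τ.injective h) (ne_of_lt hp.2)
    rcases lt_or_gt_of_ne hne with h | h
    · simp [hF, not_le.mpr h, h.le, lt_asymm h]
    · simp [hF, h.le, not_le.mpr h, h]

/-- Smith's rule: in a WSPT-sorted instance the identity permutation minimizes cost. -/
theorem stmt_0 (n : ℕ) (hn : 1 ≤ n) (w E : Fin n → ℝ)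
    (hw : ∀ j, 0 < w j) (hE : ∀ j, 0 < E j)
    (hsorted : ∀ j k : Fin n, j ≤ k → w j * E k ≥ w k * E j)
    (σ : Equiv.Perm (Fin n)) :
    cost w E (Equiv.refl (Fin n)) ≤ cost w E σ := by
  rw [cost_eq_pairwise, cost_eq_pairwise]
  apply (add_le_add_iff_left _).mpr
  refine Finset.sum_le_sum fun p hp => ?_
  simp only [Finset.mem_filter] at hp
  have hlt := hp.2
  have hmin : w p.2 * E p.1 ≤ w p.1 * E p.2 := hsorted p.1 p.2 hlt.le
  simp only [Equiv.refl_apply, lt_asymm hlt, ↓reduceIte]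
  split_ifs <;> linarith
end

section
/- Suppose the instance is WSPT-sorted, i.e. w j * E k ≥ w k * E j whenever j ≤ k in Fin n. Then the order-reversing permutation maximizes the cost: for every permutation σ : Equiv.Perm (Fin n), cost σ ≤ cost rev. (The reverse WSPT order attains the highest possible expected cost H_I.) -/
open Finset Nat

/-- In a WSPT-sorted instance the order-reversing permutation maximizes cost. -/
theorem stmt_1 (n : ℕ) (hn : 1 ≤ n) (w E : Fin n → ℝ)
    (hw : ∀ j, 0 < w j) (hE : ∀ j, 0 < E j)
    (hsorted : ∀ j k : Fin n, j ≤ k → w j * E k ≥ w k * E j)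
    (σ : Equiv.Perm (Fin n)) :
    cost w E σ ≤ cost w E (Fin.revPerm : Equiv.Perm (Fin n)) := by
  set F : Equiv.Perm (Fin n) → Fin n × Fin n → ℝ :=
    fun τ p => if τ p.2 ≤ τ p.1 then w p.1 * E p.2 else 0 with hF
  have key : ∀ τ : Equiv.Perm (Fin n),
      cost w E τ = ∑ p : Fin n × Fin n, F τ p := by
    intro τ
    rw [Fintype.sum_prod_type]
    unfold cost
    refine Finset.sum_congr rfl fun j _ => ?_
    rw [Finset.mul_sum, Finset.sum_filter]
  have swap_sum : ∀ τ : Equiv.Perm (Fin n),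
      ∑ p : Fin n × Fin n, F τ p.swap = ∑ p : Fin n × Fin n, F τ p := by
    intro τ
    exact Fintype.sum_equiv (Equiv.prodComm _ _) _ _ (fun p => by
      rw [Equiv.prodComm_apply])
  have point : ∀ p : Fin n × Fin n,
      F σ p + F σ p.swap ≤ F Fin.revPerm p + F Fin.revPerm p.swap := by
    rintro ⟨j, k⟩
    simp only [hF, Prod.swap, Fin.revPerm_apply, Fin.rev_le_rev]
    rcases lt_trichotomy j k with h | h | h
    · rw [if_pos h.le, if_neg (not_le.2 h)]
      by_cases hc : σ k ≤ σ j
      · have hne : σ j ≠ σ k := fun e => h.ne (σ.injective e)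
        rw [if_pos hc, if_neg (not_le.2 (hc.lt_of_ne hne.symm))]
      · rw [if_neg hc, if_pos (le_of_not_ge hc)]
        have := hsorted j k h.le
        nlinarith
    · subst h; simp
    · rw [if_neg (not_le.2 h), if_pos h.le]
      by_cases hc : σ k ≤ σ j
      · have hne : σ j ≠ σ k := fun e => h.ne (σ.injective e.symm)
        rw [if_pos hc, if_neg (not_le.2 (hc.lt_of_ne hne.symm))]
        have := hsorted k j h.le
        nlinarith
      · rw [if_neg hc, if_pos (le_of_not_ge hc)]
  have sum_ineq : ∑ p : Fin n × Fin n, (F σ p + F σ p.swap) ≤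
      ∑ p : Fin n × Fin n, (F Fin.revPerm p + F Fin.revPerm p.swap) :=
    Finset.sum_le_sum fun p _ => point p
  rw [Finset.sum_add_distrib, Finset.sum_add_distrib, swap_sum, swap_sum] at sum_ineq
  rw [key σ, key Fin.revPerm]
  linarith
end

section
/- Let L := min over all permutations σ of cost σ and H := max over all permutations σ of cost σ. Then the average cost of a uniformly random schedule equals their midpoint: (n !)⁻¹ * ∑ over all σ : Equiv.Perm (Fin n), cost σ = (L + H) / 2. (First part of Lemma 3.1: the uniformly random schedule RND has relative optimality gap exactly 1/2 on every instance.) -/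
open Finset Nat

lemma cost_ite {n : ℕ} (w E : Fin n → ℝ) (τ : Equiv.Perm (Fin n)) :
    cost w E τ = ∑ j, ∑ k, if τ k ≤ τ j then w j * E k else 0 := by
  unfold cost
  refine Finset.sum_congr rfl fun j _ => ?_
  rw [Finset.mul_sum, Finset.sum_filter]

lemma cost_add_rev {n : ℕ} (w E : Fin n → ℝ) (σ : Equiv.Perm (Fin n)) :
    cost w E σ + cost w E (σ.trans Fin.revPerm) =
      (∑ j, ∑ k, w j * E k) + ∑ j, w j * E j := by
  rw [cost_ite, cost_ite, ← Finset.sum_add_distrib]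
  have : (∑ j, w j * E j) = ∑ j, ∑ k, if k = j then w j * E k else 0 := by
    refine Finset.sum_congr rfl fun j _ => ?_
    rw [Finset.sum_ite_eq' Finset.univ j (fun k => w j * E k)]
    simp
  rw [this, ← Finset.sum_add_distrib]
  refine Finset.sum_congr rfl fun j _ => ?_
  rw [← Finset.sum_add_distrib, ← Finset.sum_add_distrib]
  refine Finset.sum_congr rfl fun k _ => ?_
  have hrev : (σ.trans Fin.revPerm) k ≤ (σ.trans Fin.revPerm) j ↔ σ j ≤ σ k := by
    simp [Equiv.trans_apply, Fin.rev_le_rev]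
  simp only [hrev]
  by_cases h : k = j
  · subst h; simp
  · have hne : σ k ≠ σ j := fun hc => h (σ.injective hc)
    rcases lt_or_gt_of_ne hne with h1 | h1
    · simp [le_of_lt h1, not_le.mpr h1, h]
    · simp [le_of_lt h1, not_le.mpr h1, h]

/-- The uniformly random schedule's expected cost is the midpoint of the minimal
and maximal cost. -/
theorem stmt_2 (n : ℕ) (hn : 1 ≤ n) (w E : Fin n → ℝ)
    (hw : ∀ j, 0 < w j) (hE : ∀ j, 0 < E j)
    (L H : ℝ)
    (hL : L = Finset.univ.inf' Finset.univ_nonempty (cost w E))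
    (hH : H = Finset.univ.sup' Finset.univ_nonempty (cost w E)) :
    ((n ! : ℝ))⁻¹ * ∑ σ : Equiv.Perm (Fin n), cost w E σ = (L + H) / 2 := by
  set C : ℝ := (∑ j, ∑ k, w j * E k) + ∑ j, w j * E j with hC
  -- L + H = C
  have hLle : ∀ σ, L ≤ cost w E σ := fun σ => hL ▸ Finset.inf'_le _ (Finset.mem_univ σ)
  have hHle : ∀ σ, cost w E σ ≤ H := fun σ => hH ▸ Finset.le_sup' _ (Finset.mem_univ σ)
  obtain ⟨σ₀, -, hσ₀⟩ := Finset.exists_mem_eq_sup' Finset.univ_nonempty (cost w E)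
  obtain ⟨σ₁, -, hσ₁⟩ := Finset.exists_mem_eq_inf' Finset.univ_nonempty (cost w E)
  have hH0 : H = cost w E σ₀ := hH ▸ hσ₀
  have hL1 : L = cost w E σ₁ := hL ▸ hσ₁
  have hLH : L + H = C := by
    have h1 : L + H ≤ C := by
      have := hLle (σ₀.trans Fin.revPerm)
      have h2 := cost_add_rev w E σ₀
      linarith [hH0 ▸ h2]
    have h2 : C ≤ L + H := by
      have := hHle (σ₁.trans Fin.revPerm)
      have h2 := cost_add_rev w E σ₁
      linarith [hL1 ▸ h2]
    linarith
  -- sum over all perms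
  have hbij : ∑ σ : Equiv.Perm (Fin n), cost w E σ
      = ∑ σ : Equiv.Perm (Fin n), cost w E (σ.trans Fin.revPerm) := by
    refine (Fintype.sum_equiv (Equiv.mulLeft (Fin.revPerm : Equiv.Perm (Fin n)))
      _ _ fun σ => ?_).symm
    rfl
  have hcard : (Finset.univ : Finset (Equiv.Perm (Fin n))).card = n ! := by
    simp [Fintype.card_perm]
  have hsum2 : (2 : ℝ) * ∑ σ : Equiv.Perm (Fin n), cost w E σ = (n ! : ℝ) * C := by
    have : ∑ σ : Equiv.Perm (Fin n), (cost w E σ + cost w E (σ.trans Fin.revPerm))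
        = ∑ _σ : Equiv.Perm (Fin n), C := Finset.sum_congr rfl fun σ _ => cost_add_rev w E σ
    rw [Finset.sum_add_distrib, ← hbij] at this
    rw [Finset.sum_const, hcard, nsmul_eq_mul] at this
    linarith
  have hfac : (n ! : ℝ) ≠ 0 := Nat.cast_ne_zero.mpr (Nat.factorial_ne_zero n)
  rw [hLH]
  field_simp
  linarith
end

section
/- Suppose the instance is WSPT-sorted, i.e. w j * E k ≥ w k * E j whenever j ≤ k in Fin n. Then the gap between the maximal and minimal cost equals the sum of the pairwise exchange costs: cost rev - cost id = ∑ over pairs j < k in Fin n, (w j * E k - w k * E j). -/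
open Finset Nat

/-- The gap between maximal and minimal cost is the sum of pairwise exchange costs. -/
theorem stmt_3 (n : ℕ) (hn : 1 ≤ n) (w E : Fin n → ℝ)
    (hw : ∀ j, 0 < w j) (hE : ∀ j, 0 < E j)
    (hsorted : ∀ j k : Fin n, j ≤ k → w j * E k ≥ w k * E j) :
    cost w E (Fin.revPerm : Equiv.Perm (Fin n)) - cost w E (Equiv.refl (Fin n))
      = ∑ j, ∑ k ∈ Finset.univ.filter (fun k => j < k), (w j * E k - w k * E j) := by
  have h1 : cost w E (Fin.revPerm : Equiv.Perm (Fin n)) =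
      ∑ j, w j * ∑ k ∈ Finset.univ.filter (fun k => j ≤ k), E k := by
    unfold cost
    simp [Fin.rev_le_rev]
  have h2 : cost w E (Equiv.refl (Fin n)) =
      ∑ j, w j * ∑ k ∈ Finset.univ.filter (fun k => k ≤ j), E k := by
    unfold cost; simp; rfl
  have hins : ∀ j : Fin n, (univ.filter (fun k => j ≤ k) : Finset (Fin n))
      = insert j (univ.filter (fun k => j < k)) := by
    intro j; ext k; simp [le_iff_lt_or_eq, or_comm, eq_comm]
  have hins2 : ∀ j : Fin n, (univ.filter (fun k => k ≤ j) : Finset (Fin n))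
      = insert j (univ.filter (fun k => k < j)) := by
    intro j; ext k; simp [le_iff_lt_or_eq, or_comm]
  rw [h1, h2, ← Finset.sum_sub_distrib]
  have key : ∀ j : Fin n,
      w j * ∑ k ∈ univ.filter (fun k => j ≤ k), E k
        - w j * ∑ k ∈ univ.filter (fun k => k ≤ j), E k
      = (∑ k ∈ univ.filter (fun k => j < k), w j * E k)
        - ∑ k ∈ univ.filter (fun k => k < j), w j * E k := by
    intro j
    rw [hins j, hins2 j, Finset.sum_insert (by simp), Finset.sum_insert (by simp),
      ← Finset.mul_sum, ← Finset.mul_sum]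
    ring
  simp only [key]
  have hswap : ∑ j, ∑ k ∈ univ.filter (fun k => k < j), w j * E k
      = ∑ j, ∑ k ∈ univ.filter (fun k => j < k), w k * E j := by
    simp only [Finset.sum_filter]
    rw [Finset.sum_comm]
  rw [Finset.sum_sub_distrib, hswap]
  simp [Finset.sum_sub_distrib]
end

section
/- For any randomized schedule μ, the expected cost of μ in excess of the cost of the identity order decomposes over incorrectly ordered pairs: cost μ - cost id = ∑ over pairs j < k in Fin n, P_μ(k→j) * (w j * E k - w k * E j), where P_μ(k→j) = ∑ σ in {σ | σ k < σ j}, μ σ is the probability that μ schedules k before j. (Lemma 4.2.) -/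
open Finset Nat

lemma cost_decomp {n : ℕ} (w E : Fin n → ℝ) (σ : Equiv.Perm (Fin n)) :
    cost w E σ = (∑ j, w j * E j)
      + ∑ j, ∑ k, (if σ k < σ j then w j * E k else 0) := by
  unfold cost
  rw [← Finset.sum_add_distrib]
  refine Finset.sum_congr rfl fun j _ => ?_
  rw [Finset.sum_filter, Finset.mul_sum]
  have : w j * E j = ∑ k, (if k = j then w j * E k else 0) := by
    simp
  rw [this, ← Finset.sum_add_distrib]
  refine Finset.sum_congr rfl fun k _ => ?_
  rcases eq_or_ne k j with h | h
  · subst h; simp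
  · have hne : σ k ≠ σ j := fun hh => h (σ.injective hh)
    have : (σ k ≤ σ j) = (σ k < σ j) := by
      simp [lt_iff_le_and_ne, hne]
    simp [h, this]

lemma symmetrize {n : ℕ} (f : Fin n → Fin n → ℝ) (hdiag : ∀ j, f j j = 0) :
    ∑ j, ∑ k, f j k
      = ∑ j, ∑ k, (if j < k then f j k + f k j else 0) := by
  have h1 : ∀ j k : Fin n,
      f j k = (if j < k then f j k else 0) + (if k < j then f j k else 0) := by
    intro j k
    rcases lt_trichotomy j k with h | h | h
    · simp [h, asymm h]
    · subst h; simp [hdiag]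
    · simp [h, asymm h]
  calc ∑ j, ∑ k, f j k
      = ∑ j, ∑ k, ((if j < k then f j k else 0) + (if k < j then f j k else 0)) := by
        refine Finset.sum_congr rfl fun j _ => Finset.sum_congr rfl fun k _ => h1 j k
    _ = (∑ j, ∑ k, (if j < k then f j k else 0))
        + ∑ j, ∑ k, (if k < j then f j k else 0) := by
        rw [← Finset.sum_add_distrib]
        exact Finset.sum_congr rfl fun j _ => Finset.sum_add_distrib
    _ = (∑ j, ∑ k, (if j < k then f j k else 0))
        + ∑ j, ∑ k, (if j < k then f k j else 0) := by
        congr 1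
        exact Finset.sum_comm
    _ = ∑ j, ∑ k, (if j < k then f j k + f k j else 0) := by
        rw [← Finset.sum_add_distrib]
        refine Finset.sum_congr rfl fun j _ => ?_
        rw [← Finset.sum_add_distrib]
        refine Finset.sum_congr rfl fun k _ => ?_
        by_cases h : j < k <;> simp [h]

lemma cost_sub {n : ℕ} (w E : Fin n → ℝ) (σ : Equiv.Perm (Fin n)) :
    cost w E σ - cost w E (Equiv.refl (Fin n))
      = ∑ j, ∑ k, (if j < k then (if σ k < σ j then w j * E k - w k * E j else 0) else 0) := by
  rw [cost_decomp, cost_decomp]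
  have hσ := symmetrize (fun j k => if σ k < σ j then w j * E k else 0) (by intro j; simp)
  have hid := symmetrize (fun j k => if (Equiv.refl (Fin n)) k < (Equiv.refl (Fin n)) j
      then w j * E k else 0) (by intro j; simp)
  simp only [Equiv.refl_apply] at hσ hid ⊢
  rw [hσ, hid]
  rw [add_sub_add_left_eq_sub, ← Finset.sum_sub_distrib]
  refine Finset.sum_congr rfl fun j _ => ?_
  rw [← Finset.sum_sub_distrib]
  refine Finset.sum_congr rfl fun k _ => ?_
  by_cases hjk : j < k
  · simp only [hjk, if_true, asymm hjk, if_false]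
    have hne : σ j ≠ σ k := fun hh => (_root_.ne_of_lt hjk) (σ.injective hh)
    rcases lt_or_gt_of_ne hne with h | h
    · simp [h, asymm h]
    · simp [h, asymm h]
  · simp [hjk]

/-- Lemma 4.2: the expected cost of a randomized schedule in excess of the cost of
the identity order decomposes over incorrectly ordered pairs. -/
theorem stmt_4 (n : ℕ) (hn : 1 ≤ n) (w E : Fin n → ℝ)
    (hw : ∀ j, 0 < w j) (hE : ∀ j, 0 < E j)
    (μ : Equiv.Perm (Fin n) → ℝ)
    (hμ0 : ∀ σ, 0 ≤ μ σ) (hμ1 : ∑ σ, μ σ = 1) :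
    rcost w E μ - cost w E (Equiv.refl (Fin n))
      = ∑ j, ∑ k ∈ Finset.univ.filter (fun k => j < k),
          Pbefore μ k j * (w j * E k - w k * E j) := by
  have lhs_eq : rcost w E μ - cost w E (Equiv.refl (Fin n))
      = ∑ σ, μ σ * (cost w E σ - cost w E (Equiv.refl (Fin n))) := by
    unfold rcost
    rw [Finset.sum_congr rfl (fun σ _ => mul_sub (μ σ) _ _), Finset.sum_sub_distrib,
      ← Finset.sum_mul, hμ1, one_mul]
  rw [lhs_eq]
  simp only [cost_sub]
  have : ∀ (σ : Equiv.Perm (Fin n)) (j : Fin n), μ σ * ∑ k, (if j < k then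
        (if σ k < σ j then w j * E k - w k * E j else 0) else 0)
      = ∑ k, (if j < k then (if σ k < σ j then μ σ * (w j * E k - w k * E j) else 0) else 0) := by
    intro σ j
    rw [Finset.mul_sum]
    refine Finset.sum_congr rfl fun k _ => ?_
    by_cases h1 : j < k <;> by_cases h2 : σ k < σ j <;> simp [h1, h2]
  simp only [this, Finset.mul_sum]
  rw [Finset.sum_comm]
  refine Finset.sum_congr rfl fun j _ => ?_
  rw [Finset.sum_comm, Finset.sum_filter]
  refine Finset.sum_congr rfl fun k _ => ?_
  by_cases h1 : j < k
  · simp only [h1, if_true]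
    unfold Pbefore
    rw [Finset.sum_filter, Finset.sum_mul]
    refine Finset.sum_congr rfl fun σ _ => ?_
    by_cases h2 : σ k < σ j <;> simp [h2]
  · simp [h1]
end

section
/- Suppose the instance is WSPT-sorted, i.e. w j * E k ≥ w k * E j whenever j ≤ k in Fin n. If a randomized schedule μ satisfies P_μ(j→k) ≥ 1/2 for every pair j < k with w j * E k > w k * E j, then μ is at least as good as the uniformly random schedule: cost μ ≤ (n !)⁻¹ * ∑ over all σ : Equiv.Perm (Fin n), cost σ. -/
open Finset Nat

lemma pbefore_add {n : ℕ} (μ : Equiv.Perm (Fin n) → ℝ) {j k : Fin n} (h : j ≠ k) :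
    Pbefore μ j k + Pbefore μ k j = ∑ σ, μ σ := by
  rw [Pbefore, Pbefore,
    ← Finset.sum_filter_add_sum_filter_not Finset.univ (fun σ : Equiv.Perm (Fin n) => σ j < σ k) μ]
  congr 1
  apply Finset.sum_congr _ (fun _ _ => rfl)
  ext σ
  simp only [mem_filter, mem_univ, true_and, not_lt]
  constructor
  · exact le_of_lt
  · intro hle
    exact lt_of_le_of_ne hle (fun he => h (σ.injective he.symm))

lemma pbefore_symm {n : ℕ} (c : ℝ) (j k : Fin n) :
    Pbefore (fun _ => c) j k = Pbefore (fun _ => c) k j := by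
  unfold Pbefore
  refine Finset.sum_nbij' (fun σ => σ * Equiv.swap j k) (fun σ => σ * Equiv.swap j k) ?_ ?_ ?_ ?_ ?_
  · intro σ hσ
    simp only [mem_filter, mem_univ, true_and] at *
    simpa [Equiv.swap_apply_left, Equiv.swap_apply_right] using hσ
  · intro σ hσ
    simp only [mem_filter, mem_univ, true_and] at *
    simpa [Equiv.swap_apply_left, Equiv.swap_apply_right] using hσ
  · intro σ _; simp [mul_assoc]
  · intro σ _; simp [mul_assoc]
  · intro σ _; rfl

lemma rcost_eq {n : ℕ} (w E : Fin n → ℝ) (μ : Equiv.Perm (Fin n) → ℝ)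
    (hμ1 : ∑ σ, μ σ = 1) :
    rcost w E μ = (∑ j, w j * E j)
      + ∑ p ∈ (Finset.univ : Finset (Fin n)).offDiag, w p.1 * E p.2 * Pbefore μ p.2 p.1 := by
  have key : rcost w E μ
      = ∑ j, ∑ k, w j * E k * ∑ σ ∈ Finset.univ.filter
          (fun σ : Equiv.Perm (Fin n) => σ k ≤ σ j), μ σ := by
    unfold rcost cost
    have : ∀ σ : Equiv.Perm (Fin n),
        μ σ * ∑ j, w j * ∑ k ∈ Finset.univ.filter (fun k => σ k ≤ σ j), E k
        = ∑ j, ∑ k, (if σ k ≤ σ j then μ σ * (w j * E k) else 0) := by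
      intro σ
      rw [Finset.mul_sum]
      refine Finset.sum_congr rfl fun j _ => ?_
      rw [Finset.sum_filter, Finset.mul_sum, Finset.mul_sum]
      refine Finset.sum_congr rfl fun k _ => ?_
      split <;> simp
    rw [Finset.sum_congr rfl fun σ _ => this σ, Finset.sum_comm]
    refine Finset.sum_congr rfl fun j _ => ?_
    rw [Finset.sum_comm]
    refine Finset.sum_congr rfl fun k _ => ?_
    rw [← Finset.sum_filter, ← Finset.sum_mul, mul_comm]
  rw [key, ← Finset.sum_product']
  rw [← Finset.diag_union_offDiag (Finset.univ : Finset (Fin n)),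
    Finset.sum_union (Finset.disjoint_diag_offDiag _)]
  congr 1
  · rw [Finset.sum_diag]
    refine Finset.sum_congr rfl fun j _ => ?_
    have : Finset.univ.filter (fun σ : Equiv.Perm (Fin n) => σ j ≤ σ j) = Finset.univ := by
      simp
    rw [this, hμ1, mul_one]
  · refine Finset.sum_congr rfl fun p hp => ?_
    simp only [Finset.mem_offDiag] at hp
    congr 1
    unfold Pbefore
    apply Finset.sum_congr _ fun _ _ => rfl
    ext σ
    simp only [mem_filter, mem_univ, true_and]
    constructor
    · intro hle
      exact lt_of_le_of_ne hle (fun he => hp.2.2 (σ.injective he).symm)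
    · exact le_of_lt

lemma sum_offDiag_pair {n : ℕ} (g : Fin n × Fin n → ℝ) :
    ∑ p ∈ (Finset.univ : Finset (Fin n)).offDiag, g p
    = ∑ p ∈ (Finset.univ : Finset (Fin n)).offDiag.filter (fun p => p.1 < p.2),
        (g p + g p.swap) := by
  rw [← Finset.sum_filter_add_sum_filter_not ((Finset.univ : Finset (Fin n)).offDiag)
    (fun p => p.1 < p.2) g, Finset.sum_add_distrib]
  congr 1
  refine Finset.sum_nbij' Prod.swap Prod.swap ?_ ?_ ?_ ?_ ?_
  · intro p hp
    simp only [Finset.mem_filter, Finset.mem_offDiag, mem_univ, true_and, not_lt] at *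
    exact ⟨Ne.symm hp.1, lt_of_le_of_ne hp.2 (Ne.symm hp.1)⟩
  · intro p hp
    simp only [Finset.mem_filter, Finset.mem_offDiag, mem_univ, true_and, not_lt] at *
    exact ⟨Ne.symm hp.1, le_of_lt hp.2⟩
  · intro p _; simp
  · intro p _; simp
  · intro p _; rfl


/-- If every incorrectly ordered pair is scheduled correctly with probability at
least `1/2`, the randomized schedule beats the uniformly random schedule. -/
theorem stmt_6 (n : ℕ) (hn : 1 ≤ n) (w E : Fin n → ℝ)
    (hw : ∀ j, 0 < w j) (hE : ∀ j, 0 < E j)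
    (hsorted : ∀ j k : Fin n, j ≤ k → w j * E k ≥ w k * E j)
    (μ : Equiv.Perm (Fin n) → ℝ)
    (hμ0 : ∀ σ, 0 ≤ μ σ) (hμ1 : ∑ σ, μ σ = 1)
    (hP : ∀ j k : Fin n, j < k → w j * E k > w k * E j → Pbefore μ j k ≥ 1 / 2) :
    rcost w E μ ≤ ((n ! : ℝ))⁻¹ * ∑ σ : Equiv.Perm (Fin n), cost w E σ := by
  set μ₀ : Equiv.Perm (Fin n) → ℝ := fun _ => ((n ! : ℝ))⁻¹ with hμ₀
  have hfac : (0 : ℝ) < (n ! : ℝ) := by exact_mod_cast Nat.factorial_pos n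
  have hμ₀1 : ∑ σ, μ₀ σ = 1 := by
    simp only [hμ₀, Finset.sum_const, Finset.card_univ, Fintype.card_perm, Fintype.card_fin,
      nsmul_eq_mul]
    field_simp
  have hrhs : ((n ! : ℝ))⁻¹ * ∑ σ : Equiv.Perm (Fin n), cost w E σ = rcost w E μ₀ := by
    rw [rcost, Finset.mul_sum]
  have hhalf : ∀ j k : Fin n, j ≠ k → Pbefore μ₀ j k = 1 / 2 := by
    intro j k hjk
    have h1 := pbefore_add μ₀ hjk
    rw [hμ₀1] at h1
    have h2 := pbefore_symm ((n ! : ℝ))⁻¹ j k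
    rw [hμ₀] at h1 ⊢
    linarith [h2, h1]
  rw [hrhs, rcost_eq w E μ hμ1, rcost_eq w E μ₀ hμ₀1]
  apply _root_.add_le_add (le_refl _)
  rw [sum_offDiag_pair, sum_offDiag_pair]
  apply Finset.sum_le_sum
  intro p hp
  obtain ⟨j, k⟩ := p
  simp only [Finset.mem_filter, Finset.mem_offDiag, Finset.mem_univ, true_and] at hp
  obtain ⟨hne, hlt⟩ := hp
  simp only [Prod.fst_swap, Prod.snd_swap]
  have hsumP : Pbefore μ j k + Pbefore μ k j = 1 := by rw [pbefore_add μ hne, hμ1]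
  rw [hhalf k j (Ne.symm hne), hhalf j k hne]
  have hge := hsorted j k (le_of_lt hlt)
  rcases lt_or_eq_of_le hge with hgt | heq
  · have hp2 := hP j k hlt hgt
    have h4 : w j * E k * Pbefore μ j k + w j * E k * Pbefore μ k j = w j * E k := by
      linear_combination (w j * E k) * hsumP
    nlinarith [mul_nonneg (by linarith : (0:ℝ) ≤ w j * E k - w k * E j)
      (by linarith : (0:ℝ) ≤ Pbefore μ j k - 1 / 2), h4]
  · exact le_of_eq (by linear_combination (w j * E k) * hsumP + (Pbefore μ j k - 1 / 2) * heq)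
end

section
/- Let X and Y be independent random variables on a probability space (Ω, ℙ). Suppose X has density f which vanishes almost everywhere on (-∞, 0) and is symmetric about a > 0 (f (a - t) = f (a + t) for all t), and Y has density g which vanishes almost everywhere on (-∞, 0) and is symmetric about b > 0 (g (b - t) = g (b + t) for all t). Let u, v > 0 be reals with u * b ≥ v * a. Then ℙ {ω | v * X ω ≤ u * Y ω} ≥ 1/2. (Key pairwise inequality behind Theorem 5.2: for jobs with symmetric processing time distributions, SAM schedules any pair of jobs in the order of nonincreasing weight over mean, w_j/E_j ≥ w_k/E_k, with probability at least 1/2; here u = w_j, v = w_k, a = E_j, b = E_k.) -/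
open MeasureTheory

/-- `X` has density `f` (with respect to Lebesgue measure) under `ℙ`. -/
def HasDensity {Ω : Type*} [MeasurableSpace Ω] (ℙ : Measure Ω) (X : Ω → ℝ) (f : ℝ → ℝ) : Prop :=
  (∀ x, 0 ≤ f x) ∧ Measurable f ∧ (∫ x, f x = 1) ∧
    Measure.map X ℙ = volume.withDensity (fun x => ENNReal.ofReal (f x))

/-- `f` vanishes (Lebesgue-) almost everywhere on the set `s`. -/
def VanishesAEOn (f : ℝ → ℝ) (s : Set ℝ) : Prop :=
  ∀ᵐ x ∂(volume.restrict s), f x = 0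

lemma refl_measurePreserving (c : ℝ) :
    MeasurePreserving (fun x : ℝ => c - x) volume volume := by
  have := (measurePreserving_add_left (volume : Measure ℝ) c).comp
    (Measure.measurePreserving_neg (volume : Measure ℝ))
  simpa [Function.comp_def, sub_eq_add_neg] using this

lemma map_withDensity_refl (c : ℝ) (h : ℝ → ENNReal) (hm : Measurable h)
    (hsym : ∀ x, h (c - x) = h x) :
    Measure.map (fun x : ℝ => c - x) (volume.withDensity h) = volume.withDensity h := by
  have hr : Measurable (fun x : ℝ => c - x) := (measurable_const.sub measurable_id)
  ext s hs
  rw [Measure.map_apply hr hs, withDensity_apply _ (hr hs), withDensity_apply _ hs]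
  have key : ∫⁻ x in s, h x = ∫⁻ x in s, h x ∂(Measure.map (fun x : ℝ => c - x) volume) := by
    rw [(refl_measurePreserving c).map_eq]
  rw [key, setLIntegral_map hs hm hr]
  exact lintegral_congr fun x => (hsym x).symm

/-- Key pairwise inequality behind Theorem 5.2 (symmetric distributions): if
`u * b ≥ v * a`, SAM orders the pair correctly with probability at least `1/2`. -/
theorem stmt_10 {Ω : Type*} [MeasurableSpace Ω] (ℙ : Measure Ω) [IsProbabilityMeasure ℙ]
    (X Y : Ω → ℝ) (hX : Measurable X) (hY : Measurable Y)
    (hindep : ProbabilityTheory.IndepFun X Y ℙ)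
    (f g : ℝ → ℝ) (hf : HasDensity ℙ X f) (hg : HasDensity ℙ Y g)
    (hf0 : VanishesAEOn f (Set.Iio 0)) (hg0 : VanishesAEOn g (Set.Iio 0))
    (a b : ℝ) (ha : 0 < a) (hb : 0 < b)
    (hfsym : ∀ t : ℝ, f (a - t) = f (a + t))
    (hgsym : ∀ t : ℝ, g (b - t) = g (b + t))
    (u v : ℝ) (hu : 0 < u) (hv : 0 < v) (huv : u * b ≥ v * a) :
    1 / 2 ≤ ℙ {ω | v * X ω ≤ u * Y ω} := by
  obtain ⟨hfpos, hfm, hfint, hfmap⟩ := hf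
  obtain ⟨hgpos, hgm, hgint, hgmap⟩ := hg
  set μ : Measure ℝ := Measure.map X ℙ with hμ
  set ν : Measure ℝ := Measure.map Y ℙ with hν
  -- reflection invariance of μ under x ↦ 2a - x
  have hμinv : Measure.map (fun x : ℝ => 2 * a - x) μ = μ := by
    rw [hfmap]
    apply map_withDensity_refl _ _ (ENNReal.measurable_ofReal.comp hfm)
    intro x
    have : f (2 * a - x) = f x := by
      have h1 := hfsym (x - a)
      have h2 : a - (x - a) = 2 * a - x := by ring
      have h3 : a + (x - a) = x := by ring
      rw [h2, h3] at h1
      exact h1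
    simp [this]
  have hνinv : Measure.map (fun x : ℝ => 2 * b - x) ν = ν := by
    rw [hgmap]
    apply map_withDensity_refl _ _ (ENNReal.measurable_ofReal.comp hgm)
    intro x
    have : g (2 * b - x) = g x := by
      have h1 := hgsym (x - b)
      have h2 : b - (x - b) = 2 * b - x := by ring
      have h3 : b + (x - b) = x := by ring
      rw [h2, h3] at h1
      exact h1
    simp [this]
  -- joint law is product measure
  have hpair : Measure.map (fun ω => (X ω, Y ω)) ℙ = μ.prod ν :=
    (ProbabilityTheory.indepFun_iff_map_prod_eq_prod_map_map hX.aemeasurable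
      hY.aemeasurable).mp hindep
  have : IsProbabilityMeasure μ := Measure.isProbabilityMeasure_map hX.aemeasurable
  have : IsProbabilityMeasure ν := Measure.isProbabilityMeasure_map hY.aemeasurable
  set π : Measure (ℝ × ℝ) := μ.prod ν with hπ
  have hra : Measurable (fun x : ℝ => 2 * a - x) := measurable_const.sub measurable_id
  have hrb : Measurable (fun x : ℝ => 2 * b - x) := measurable_const.sub measurable_id
  have hT : Measurable (Prod.map (fun x : ℝ => 2 * a - x) (fun x : ℝ => 2 * b - x)) :=
    hra.prodMap hrb
  have hπinv : Measure.map (Prod.map (fun x : ℝ => 2 * a - x) (fun x : ℝ => 2 * b - x)) π = π := by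
    rw [hπ, ← Measure.map_prod_map _ _ hra hrb, hμinv, hνinv]
  set A : Set (ℝ × ℝ) := {p | v * p.1 ≤ u * p.2} with hA
  have hAm : MeasurableSet A :=
    measurableSet_le (measurable_const.mul measurable_fst) (measurable_const.mul measurable_snd)
  -- complement maps into A
  have hsub : Aᶜ ⊆ (Prod.map (fun x : ℝ => 2 * a - x) (fun x : ℝ => 2 * b - x)) ⁻¹' A := by
    rintro ⟨x, y⟩ hxy
    simp only [hA, Set.mem_compl_iff, Set.mem_setOf_eq, not_le] at hxy
    simp only [Set.mem_preimage, Prod.map_apply, hA, Set.mem_setOf_eq]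
    nlinarith
  have hcompl : π Aᶜ ≤ π A := by
    calc π Aᶜ ≤ π ((Prod.map (fun x : ℝ => 2 * a - x) (fun x : ℝ => 2 * b - x)) ⁻¹' A) :=
          measure_mono hsub
      _ = (Measure.map (Prod.map (fun x : ℝ => 2 * a - x) (fun x : ℝ => 2 * b - x)) π) A :=
          (Measure.map_apply hT hAm).symm
      _ = π A := by rw [hπinv]
  have hπprob : IsProbabilityMeasure π := by infer_instance
  have htotal : π A + π Aᶜ = 1 := prob_add_prob_compl hAm
  have hge : 1 / 2 ≤ π A := by
    by_contra hlt
    push_neg at hlt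
    have : π A + π Aᶜ < 1 := by
      calc π A + π Aᶜ ≤ π A + π A := add_le_add_right hcompl _
        _ < 1 / 2 + 1 / 2 := by
            exact ENNReal.add_lt_add hlt hlt
        _ = 1 := by rw [ENNReal.add_halves]
    rw [htotal] at this
    exact lt_irrefl _ this
  have hset : ℙ {ω | v * X ω ≤ u * Y ω} = π A := by
    have : {ω | v * X ω ≤ u * Y ω} = (fun ω => (X ω, Y ω)) ⁻¹' A := rfl
    rw [this, ← Measure.map_apply (hX.prodMk hY) hAm, hpair]
  rw [hset]
  exact hge
end

section
/- Let Z₁ and Z₂ be independent random variables on a probability space (Ω, ℙ) that both have the same density g, where g vanishes almost everywhere on (-∞, 0). Then for every real r ≥ 1, ℙ {ω | Z₁ ω ≤ r * Z₂ ω} ≥ 1/2. (Key pairwise inequality behind Theorem 5.4: for shape-uniform processing time distributions f_j(x) = λ_j g(λ_j x), SAM schedules any pair of jobs with w_j λ_j ≥ w_k λ_k in the correct order with probability at least 1/2; here r = (w_j λ_j)/(w_k λ_k).) -/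
open MeasureTheory

/-- Key pairwise inequality behind Theorem 5.4 (shape-uniform distributions). -/
theorem stmt_11 {Ω : Type*} [MeasurableSpace Ω] (ℙ : Measure Ω) [IsProbabilityMeasure ℙ]
    (Z₁ Z₂ : Ω → ℝ) (hZ₁ : Measurable Z₁) (hZ₂ : Measurable Z₂)
    (hindep : ProbabilityTheory.IndepFun Z₁ Z₂ ℙ)
    (g : ℝ → ℝ) (hg₁ : HasDensity ℙ Z₁ g) (hg₂ : HasDensity ℙ Z₂ g)
    (hg0 : VanishesAEOn g (Set.Iio 0))
    (r : ℝ) (hr : 1 ≤ r) :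
    1 / 2 ≤ ℙ {ω | Z₁ ω ≤ r * Z₂ ω} := by
  obtain ⟨hgnn, hgm, hgint, hmap₁⟩ := hg₁
  obtain ⟨-, -, -, hmap₂⟩ := hg₂
  -- Z₂ is a.s. nonnegative
  have hZ₂nn : ∀ᵐ ω ∂ℙ, 0 ≤ Z₂ ω := by
    have h0 : Measure.map Z₂ ℙ (Set.Iio 0) = 0 := by
      rw [hmap₂, withDensity_apply _ measurableSet_Iio]
      exact (lintegral_eq_zero_iff hgm.ennreal_ofReal).mpr (hg0.mono fun x hx => by simp [hx])
    have := (Measure.map_apply hZ₂ measurableSet_Iio).symm.trans h0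
    filter_upwards [measure_eq_zero_iff_ae_notMem.mp this] with ω hω
    simpa [Set.mem_Iio, not_lt] using hω
  -- the joint law is the product of the common law μ
  set μ : Measure ℝ := Measure.map Z₁ ℙ with hμ
  have hμ2 : Measure.map Z₂ ℙ = μ := by rw [hmap₂, ← hmap₁]
  have hjoint : Measure.map (fun ω => (Z₁ ω, Z₂ ω)) ℙ = μ.prod μ := by
    rw [(ProbabilityTheory.indepFun_iff_map_prod_eq_prod_map_map hZ₁.aemeasurable
      hZ₂.aemeasurable).mp hindep, hμ2]
  have hμprob : IsProbabilityMeasure μ := Measure.isProbabilityMeasure_map hZ₁.aemeasurable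
  have hAm : MeasurableSet {p : ℝ × ℝ | p.1 ≤ p.2} :=
    measurableSet_le measurable_fst measurable_snd
  have hBm : MeasurableSet {p : ℝ × ℝ | p.2 ≤ p.1} :=
    measurableSet_le measurable_snd measurable_fst
  -- symmetry
  have hsym : μ.prod μ {p : ℝ × ℝ | p.2 ≤ p.1} = μ.prod μ {p : ℝ × ℝ | p.1 ≤ p.2} := by
    conv_rhs => rw [← Measure.prod_swap]
    rw [Measure.map_apply measurable_swap hAm]
    rfl
  have hhalf : 1 / 2 ≤ μ.prod μ {p : ℝ × ℝ | p.1 ≤ p.2} := by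
    have hcover : (Set.univ : Set (ℝ × ℝ)) ⊆
        {p : ℝ × ℝ | p.1 ≤ p.2} ∪ {p : ℝ × ℝ | p.2 ≤ p.1} := fun p _ => le_total p.1 p.2
    have h1 : (1 : ENNReal) ≤ μ.prod μ {p : ℝ × ℝ | p.1 ≤ p.2} +
        μ.prod μ {p : ℝ × ℝ | p.2 ≤ p.1} := by
      calc (1 : ENNReal) = μ.prod μ Set.univ := by simp
        _ ≤ μ.prod μ ({p : ℝ × ℝ | p.1 ≤ p.2} ∪ {p : ℝ × ℝ | p.2 ≤ p.1}) :=
            measure_mono hcover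
        _ ≤ _ := measure_union_le _ _
    rw [hsym] at h1
    rw [ENNReal.div_le_iff_le_mul (by norm_num) (by norm_num)]
    calc (1 : ENNReal) ≤ _ := h1
      _ = μ.prod μ {p : ℝ × ℝ | p.1 ≤ p.2} * 2 := by ring
  -- transfer to ℙ
  have hP : ℙ {ω | Z₁ ω ≤ Z₂ ω} = μ.prod μ {p : ℝ × ℝ | p.1 ≤ p.2} := by
    rw [← hjoint, Measure.map_apply (hZ₁.prodMk hZ₂) hAm]
    rfl
  -- monotone step using r ≥ 1 and Z₂ ≥ 0 a.s.
  have hmono : ℙ {ω | Z₁ ω ≤ Z₂ ω} ≤ ℙ {ω | Z₁ ω ≤ r * Z₂ ω} := by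
    apply measure_mono_ae
    filter_upwards [hZ₂nn] with ω hω hle
    exact hle.trans (le_mul_of_one_le_left hω hr)
  calc (1 : ENNReal) / 2 ≤ μ.prod μ {p : ℝ × ℝ | p.1 ≤ p.2} := hhalf
    _ = ℙ {ω | Z₁ ω ≤ Z₂ ω} := hP.symm
    _ ≤ _ := hmono
end

section
/- Let Z₁ and Z₂ be independent random variables on a probability space (Ω, ℙ) that both have the same density g, where g vanishes almost everywhere on (-∞, 0). Then for every real r ≥ 1, ℙ {ω | Z₁ ω ≤ r * Z₂ ω} - ℙ {ω | r * Z₂ ω ≤ Z₁ ω} = ∫ y in Set.Ioi (0:ℝ), g y * (∫ x in Set.Icc (y / r) (r * y), g x). (The integral identity from the proof of Theorem 5.4.) -/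
open MeasureTheory

/-- The integral identity from the proof of Theorem 5.4. -/
theorem stmt_12 {Ω : Type*} [MeasurableSpace Ω] (ℙ : Measure Ω) [IsProbabilityMeasure ℙ]
    (Z₁ Z₂ : Ω → ℝ) (hZ₁ : Measurable Z₁) (hZ₂ : Measurable Z₂)
    (hindep : ProbabilityTheory.IndepFun Z₁ Z₂ ℙ)
    (g : ℝ → ℝ) (hg₁ : HasDensity ℙ Z₁ g) (hg₂ : HasDensity ℙ Z₂ g)
    (hg0 : VanishesAEOn g (Set.Iio 0))
    (r : ℝ) (hr : 1 ≤ r) :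
    (ℙ {ω | Z₁ ω ≤ r * Z₂ ω}).toReal - (ℙ {ω | r * Z₂ ω ≤ Z₁ ω}).toReal
      = ∫ y in Set.Ioi (0:ℝ), g y * ∫ x in Set.Icc (y / r) (r * y), g x := by
  obtain ⟨hgnn, hgm, hgi, hmap₁⟩ := hg₁
  obtain ⟨-, -, -, hmap₂⟩ := hg₂
  set μ : Measure ℝ := volume.withDensity (fun x => ENNReal.ofReal (g x)) with hμ
  have hr0 : (0:ℝ) < r := lt_of_lt_of_le one_pos hr
  have hint : Integrable g := by
    by_contra h
    rw [integral_undef h] at hgi; norm_num at hgi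
  have hμprob : IsProbabilityMeasure μ := by
    constructor
    rw [hμ, withDensity_apply _ MeasurableSet.univ, Measure.restrict_univ,
      ← ofReal_integral_eq_lintegral_ofReal hint (Filter.Eventually.of_forall hgnn), hgi]
    simp
  -- the joint law is the product measure
  have hjoint : ℙ.map (fun ω => (Z₁ ω, Z₂ ω)) = μ.prod μ := by
    rw [(ProbabilityTheory.indepFun_iff_map_prod_eq_prod_map_map hZ₁.aemeasurable
      hZ₂.aemeasurable).mp hindep, hmap₁, hmap₂]
  have hpm : Measurable (fun ω => (Z₁ ω, Z₂ ω)) := hZ₁.prodMk hZ₂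
  have hs₁ : MeasurableSet {p : ℝ × ℝ | p.1 ≤ r * p.2} :=
    measurableSet_le measurable_fst (measurable_const.mul measurable_snd)
  have hs₂ : MeasurableSet {p : ℝ × ℝ | r * p.2 ≤ p.1} :=
    measurableSet_le (measurable_const.mul measurable_snd) measurable_fst
  have hA2 : ℙ {ω | Z₁ ω ≤ r * Z₂ ω} = ∫⁻ y, μ (Set.Iic (r * y)) ∂μ := by
    have : ℙ {ω | Z₁ ω ≤ r * Z₂ ω} = μ.prod μ {p : ℝ × ℝ | p.1 ≤ r * p.2} := by
      rw [← hjoint, Measure.map_apply hpm hs₁]; rfl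
    rw [this, Measure.prod_apply_symm hs₁]
    congr 1
  have hB2 : ℙ {ω | r * Z₂ ω ≤ Z₁ ω} = ∫⁻ y, μ (Set.Iic (y / r)) ∂μ := by
    have : ℙ {ω | r * Z₂ ω ≤ Z₁ ω} = μ.prod μ {p : ℝ × ℝ | r * p.2 ≤ p.1} := by
      rw [← hjoint, Measure.map_apply hpm hs₂]; rfl
    rw [this, Measure.prod_apply hs₂]
    refine lintegral_congr fun x => ?_
    congr 1
    ext y
    simp [Set.mem_Iic, ← le_div_iff₀' hr0]
  -- the CDF
  set F : ℝ → ENNReal := fun t => μ (Set.Iic t) with hF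
  have hFmono : Monotone F := fun a b hab => measure_mono (Set.Iic_subset_Iic.2 hab)
  have hFmeas : Measurable F := hFmono.measurable
  have hFlt : ∀ t, F t < ⊤ := fun t => measure_lt_top μ _
  have hm₁ : Measurable fun y => F (r * y) := hFmeas.comp (measurable_const.mul measurable_id)
  have hm₂ : Measurable fun y => F (y / r) := hFmeas.comp (measurable_id.div_const r)
  have hA3 : (ℙ {ω | Z₁ ω ≤ r * Z₂ ω}).toReal = ∫ y, (F (r * y)).toReal ∂μ := by
    rw [hA2]
    exact (integral_toReal hm₁.aemeasurable (ae_of_all _ fun y => hFlt _)).symm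
  have hB3 : (ℙ {ω | r * Z₂ ω ≤ Z₁ ω}).toReal = ∫ y, (F (y / r)).toReal ∂μ := by
    rw [hB2]
    exact (integral_toReal hm₂.aemeasurable (ae_of_all _ fun y => hFlt _)).symm
  -- integrability of the truncated CDFs
  have hbdd : ∀ t, ‖(F t).toReal‖ ≤ 1 := by
    intro t
    rw [Real.norm_of_nonneg ENNReal.toReal_nonneg]
    have := prob_le_one (μ := μ) (s := Set.Iic t)
    simpa using ENNReal.toReal_mono (by simp) this
  have hint₁ : Integrable (fun y => (F (r * y)).toReal) μ :=
    (integrable_const (1:ℝ)).mono' (hm₁.ennreal_toReal).aestronglyMeasurable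
      (ae_of_all _ fun y => hbdd _)
  have hint₂ : Integrable (fun y => (F (y / r)).toReal) μ :=
    (integrable_const (1:ℝ)).mono' (hm₂.ennreal_toReal).aestronglyMeasurable
      (ae_of_all _ fun y => hbdd _)
  -- μ gives no mass to nonpositive reals
  have hIic0 : μ (Set.Iic 0) = 0 := by
    have h1 : μ (Set.Iio 0) = 0 := by
      rw [hμ, withDensity_apply _ measurableSet_Iio]
      calc ∫⁻ x in Set.Iio 0, ENNReal.ofReal (g x) = ∫⁻ x in Set.Iio 0, 0 :=
            lintegral_congr_ae (hg0.mono fun x hx => by simp [hx])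
        _ = 0 := by simp
    have h2 : μ {(0:ℝ)} = 0 := by
      rw [hμ, withDensity_apply _ (measurableSet_singleton 0),
        Measure.restrict_eq_zero.2 (by simp)]
      simp
    have : μ (Set.Iic 0) ≤ μ (Set.Iio 0) + μ {(0:ℝ)} := by
      rw [← Set.Iio_union_right]
      exact measure_union_le _ _
    simpa [h1, h2] using this
  have hae_pos : ∀ᵐ y ∂μ, 0 < y := by
    rw [ae_iff]
    convert hIic0 using 2
    ext y
    simp [not_lt]
  -- pointwise identity for positive y
  have key : ∀ᵐ y ∂μ, (F (r * y)).toReal - (F (y / r)).toReal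
      = ∫ x in Set.Icc (y / r) (r * y), g x := by
    filter_upwards [hae_pos] with y hy
    have hab : y / r ≤ r * y :=
      le_trans (div_le_self hy.le hr) (le_mul_of_one_le_left hy.le hr)
    have hsplit : F (r * y) = F (y / r) + μ (Set.Ioc (y / r) (r * y)) := by
      rw [hF]
      simp only
      rw [← Set.Iic_union_Ioc_eq_Iic hab,
        measure_union (Set.Iic_disjoint_Ioc le_rfl) measurableSet_Ioc]
    have hIoc : (μ (Set.Ioc (y / r) (r * y))).toReal = ∫ x in Set.Icc (y / r) (r * y), g x := by
      rw [hμ, withDensity_apply _ measurableSet_Ioc,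
        ← ofReal_integral_eq_lintegral_ofReal hint.integrableOn
          (ae_of_all _ fun x => hgnn x),
        ENNReal.toReal_ofReal (setIntegral_nonneg measurableSet_Ioc fun x _ => hgnn x),
        integral_Icc_eq_integral_Ioc]
    rw [hsplit, ENNReal.toReal_add (hFlt _).ne (measure_lt_top μ _).ne]
    rw [← hIoc]
    ring
  rw [hA3, hB3, ← integral_sub hint₁ hint₂, integral_congr_ae key]
  -- unfold the density
  have hconv : ∫ y, (∫ x in Set.Icc (y / r) (r * y), g x) ∂μ
      = ∫ y, g y * ∫ x in Set.Icc (y / r) (r * y), g x := by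
    rw [hμ]
    have hd : (fun x => ENNReal.ofReal (g x))
        = fun x => ((Real.toNNReal (g x) : NNReal) : ENNReal) := rfl
    rw [hd, integral_withDensity_eq_integral_smul hgm.real_toNNReal]
    refine integral_congr_ae (ae_of_all _ fun y => ?_)
    simp [NNReal.smul_def, Real.coe_toNNReal _ (hgnn y)]
  rw [hconv]
  -- restrict to positive reals
  refine (setIntegral_eq_integral_of_ae_compl_eq_zero ?_).symm
  have h0 : ∀ᵐ y : ℝ ∂volume, y ∈ Set.Iio 0 → g y = 0 :=
    (ae_restrict_iff' measurableSet_Iio).mp hg0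
  have h1 : ∀ᵐ y : ℝ ∂volume, y ≠ 0 := by
    rw [ae_iff]
    have hs : {y : ℝ | ¬ y ≠ 0} = {(0:ℝ)} := by ext y; simp
    rw [hs]
    exact measure_singleton 0
  filter_upwards [h0, h1] with y hy0 hy1 hy
  have : y < 0 := lt_of_le_of_ne (by simpa using hy) hy1
  rw [hy0 this, zero_mul]
end

section
/- Let Z₁ and Z₂ be independent random variables on a probability space (Ω, ℙ) that both have the same density g, where g vanishes almost everywhere on (-∞, 0). Then for every real a ≥ 0, ℙ {ω | Z₁ ω ≤ Z₂ ω + a} - ℙ {ω | Z₂ ω + a ≤ Z₁ ω} = ∫ y in Set.Ioi (0:ℝ), g y * (∫ x in Set.Icc (y - a) (y + a), g x). (The integral identity from the proof of Theorem 5.6.) -/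
open MeasureTheory

/-- The integral identity from the proof of Theorem 5.6. -/
theorem stmt_14 {Ω : Type*} [MeasurableSpace Ω] (ℙ : Measure Ω) [IsProbabilityMeasure ℙ]
    (Z₁ Z₂ : Ω → ℝ) (hZ₁ : Measurable Z₁) (hZ₂ : Measurable Z₂)
    (hindep : ProbabilityTheory.IndepFun Z₁ Z₂ ℙ)
    (g : ℝ → ℝ) (hg₁ : HasDensity ℙ Z₁ g) (hg₂ : HasDensity ℙ Z₂ g)
    (hg0 : VanishesAEOn g (Set.Iio 0))
    (a : ℝ) (ha : 0 ≤ a) :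
    (ℙ {ω | Z₁ ω ≤ Z₂ ω + a}).toReal - (ℙ {ω | Z₂ ω + a ≤ Z₁ ω}).toReal
      = ∫ y in Set.Ioi (0:ℝ), g y * ∫ x in Set.Icc (y - a) (y + a), g x := by
  obtain ⟨hgnn, hgm, hgint, hmap₁⟩ := hg₁
  obtain ⟨-, -, -, hmap₂⟩ := hg₂
  set μ : Measure ℝ := volume.withDensity (fun x => ENNReal.ofReal (g x)) with hμ
  have hμac : μ ≪ volume := withDensity_absolutelyContinuous _ _
  have hμprob : IsProbabilityMeasure μ := by
    rw [← hmap₁]; exact Measure.isProbabilityMeasure_map hZ₁.aemeasurable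
  have hnoatom : NoAtoms μ := ⟨fun x => hμac (measure_singleton x)⟩
  -- the (ENNReal-valued) cdf of μ
  have hFm : Measurable fun y : ℝ => μ (Set.Iic y) :=
    Monotone.measurable (fun u v huv => measure_mono (Set.Iic_subset_Iic.mpr huv))
  set F : ℝ → ℝ := fun t => (μ (Set.Iic t)).toReal with hFdef
  have hFmeas : Measurable F := hFm.ennreal_toReal
  have hFnn : ∀ t, 0 ≤ F t := fun t => ENNReal.toReal_nonneg
  have hF1 : ∀ t, F t ≤ 1 := fun t => by
    calc F t ≤ (μ Set.univ).toReal :=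
          ENNReal.toReal_mono (measure_ne_top μ _) (measure_mono (Set.subset_univ _))
      _ = 1 := by simp
  -- joint law
  have hjoint : Measure.map (fun ω => (Z₁ ω, Z₂ ω)) ℙ = μ.prod μ := by
    rw [(ProbabilityTheory.indepFun_iff_map_prod_eq_prod_map_map hZ₁.aemeasurable
      hZ₂.aemeasurable).mp hindep, hmap₁, hmap₂]
  have hpairm : Measurable fun ω => (Z₁ ω, Z₂ ω) := hZ₁.prodMk hZ₂
  have hS₁ : MeasurableSet {p : ℝ × ℝ | p.1 ≤ p.2 + a} :=
    measurableSet_le measurable_fst (measurable_snd.add_const a)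
  have hS₂ : MeasurableSet {p : ℝ × ℝ | p.2 + a ≤ p.1} :=
    measurableSet_le (measurable_snd.add_const a) measurable_fst
  -- probabilities as lintegrals
  have hA : ℙ {ω | Z₁ ω ≤ Z₂ ω + a} = ∫⁻ y, ENNReal.ofReal (g y) * μ (Set.Iic (y + a)) := by
    have h1 : ℙ {ω | Z₁ ω ≤ Z₂ ω + a} = (μ.prod μ) {p : ℝ × ℝ | p.1 ≤ p.2 + a} := by
      rw [← hjoint, Measure.map_apply hpairm hS₁]; rfl
    rw [h1, Measure.prod_apply_symm hS₁]
    have h2 : ∀ y : ℝ, μ ((fun x => (x, y)) ⁻¹' {p : ℝ × ℝ | p.1 ≤ p.2 + a})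
        = μ (Set.Iic (y + a)) := fun y => rfl
    simp_rw [h2]
    have hm' : Measurable fun y : ℝ => μ (Set.Iic (y + a)) := hFm.comp (measurable_add_const a)
    conv_lhs => rw [hμ]
    rw [lintegral_withDensity_eq_lintegral_mul _ hgm.ennreal_ofReal hm']
    rfl
  have hB : ℙ {ω | Z₂ ω + a ≤ Z₁ ω} = ∫⁻ y, ENNReal.ofReal (g y) * μ (Set.Iic (y - a)) := by
    have h1 : ℙ {ω | Z₂ ω + a ≤ Z₁ ω} = (μ.prod μ) {p : ℝ × ℝ | p.2 + a ≤ p.1} := by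
      rw [← hjoint, Measure.map_apply hpairm hS₂]; rfl
    rw [h1, Measure.prod_apply hS₂]
    have h2 : ∀ x : ℝ, (Prod.mk x ⁻¹' {p : ℝ × ℝ | p.2 + a ≤ p.1}) = Set.Iic (x - a) := by
      intro x; ext y; simp [Set.mem_Iic, le_sub_iff_add_le]
    simp_rw [h2]
    have hm' : Measurable fun y : ℝ => μ (Set.Iic (y - a)) := hFm.comp (measurable_sub_const a)
    conv_lhs => rw [hμ]
    rw [lintegral_withDensity_eq_lintegral_mul _ hgm.ennreal_ofReal hm']
    rfl
  -- convert to Bochner integrals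
  have hconv : ∀ b : ℝ, (∫⁻ y, ENNReal.ofReal (g y) * μ (Set.Iic (y + b))).toReal
      = ∫ y, g y * F (y + b) := by
    intro b
    have hm' : Measurable fun y : ℝ => F (y + b) := hFmeas.comp (measurable_add_const b)
    rw [integral_eq_lintegral_of_nonneg_ae
      (Filter.Eventually.of_forall fun y => mul_nonneg (hgnn y) (hFnn _))
      ((hgm.mul hm').aestronglyMeasurable)]
    congr 1
    apply lintegral_congr
    intro y
    rw [ENNReal.ofReal_mul (hgnn y), ENNReal.ofReal_toReal (measure_ne_top μ _)]
  have hAr : (ℙ {ω | Z₁ ω ≤ Z₂ ω + a}).toReal = ∫ y, g y * F (y + a) := by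
    rw [hA, hconv a]
  have hBr : (ℙ {ω | Z₂ ω + a ≤ Z₁ ω}).toReal = ∫ y, g y * F (y + (-a)) := by
    rw [hB]
    have := hconv (-a)
    simp only [← sub_eq_add_neg] at this ⊢
    rw [this]
  -- integrability
  have hgInt : Integrable g (volume : Measure ℝ) := by
    by_contra h
    rw [integral_undef h] at hgint
    exact one_ne_zero hgint.symm
  have hIntF : ∀ b : ℝ, Integrable (fun y => g y * F (y + b)) (volume : Measure ℝ) := by
    intro b
    have hm' : Measurable fun y : ℝ => F (y + b) := hFmeas.comp (measurable_add_const b)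
    apply hgInt.mono ((hgm.mul hm').aestronglyMeasurable)
    filter_upwards with y
    rw [Real.norm_eq_abs, Real.norm_eq_abs, abs_of_nonneg (hgnn y),
      Pi.mul_apply, abs_of_nonneg (mul_nonneg (hgnn y) (hFnn _))]
    exact mul_le_of_le_one_right (hgnn y) (hF1 _)
  -- key pointwise identity
  have hFdiff : ∀ y : ℝ, F (y + a) - F (y + (-a)) = (μ (Set.Icc (y - a) (y + a))).toReal := by
    intro y
    have hle : y - a ≤ y + a := by linarith
    have hsplit : μ (Set.Iic (y + a)) = μ (Set.Iic (y - a)) + μ (Set.Ioc (y - a) (y + a)) := by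
      rw [← measure_union (Set.Iic_disjoint_Ioc le_rfl) measurableSet_Ioc,
        Set.Iic_union_Ioc_eq_Iic hle]
    have h2 : y + (-a) = y - a := by ring
    rw [hFdef, h2]
    simp only
    rw [hsplit, ENNReal.toReal_add (measure_ne_top μ _) (measure_ne_top μ _),
      measure_congr (Ioc_ae_eq_Icc (μ := μ))]
    ring
  -- the difference
  have hmain : (ℙ {ω | Z₁ ω ≤ Z₂ ω + a}).toReal - (ℙ {ω | Z₂ ω + a ≤ Z₁ ω}).toReal
      = ∫ y, g y * (μ (Set.Icc (y - a) (y + a))).toReal := by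
    rw [hAr, hBr, ← integral_sub (hIntF a) (hIntF (-a))]
    apply integral_congr_ae
    filter_upwards with y
    rw [← mul_sub, hFdiff y]
  -- identify the inner integral
  have hIcc : ∀ y : ℝ, (μ (Set.Icc (y - a) (y + a))).toReal
      = ∫ x in Set.Icc (y - a) (y + a), g x := by
    intro y
    rw [hμ, withDensity_apply _ measurableSet_Icc,
      integral_eq_lintegral_of_nonneg_ae
        (Filter.Eventually.of_forall fun x => hgnn x) hgm.aestronglyMeasurable.restrict]
  have hTmeq : (fun y => g y * (μ (Set.Icc (y - a) (y + a))).toReal)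
      = fun y => g y * ∫ x in Set.Icc (y - a) (y + a), g x := by
    funext y; rw [hIcc y]
  -- integrability of the combined integrand
  have hTint : Integrable (fun y => g y * (μ (Set.Icc (y - a) (y + a))).toReal)
      (volume : Measure ℝ) := by
    have heq : (fun y => g y * (μ (Set.Icc (y - a) (y + a))).toReal)
        = fun y => g y * F (y + a) - g y * F (y + (-a)) := by
      funext y; rw [← mul_sub, hFdiff y]
    rw [heq]
    exact (hIntF a).sub (hIntF (-a))
  -- restrict to Ioi 0
  have hIic0 : ∫ y in Set.Iic (0:ℝ), g y * (μ (Set.Icc (y - a) (y + a))).toReal = 0 := by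
    apply integral_eq_zero_of_ae
    have hres : (volume : Measure ℝ).restrict (Set.Iio 0)
        = (volume : Measure ℝ).restrict (Set.Iic 0) :=
      Measure.restrict_congr_set Iio_ae_eq_Iic
    have hg0' : ∀ᵐ x ∂((volume : Measure ℝ).restrict (Set.Iic 0)), g x = 0 := by
      rw [← hres]; exact hg0
    filter_upwards [hg0'] with y hy
    simp [hy]
  have hsplit2 := integral_add_compl (measurableSet_Iic (a := (0:ℝ))) hTint
  rw [Set.compl_Iic] at hsplit2
  rw [hmain, ← hsplit2, hIic0, zero_add, hTmeq]
end
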